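/- arXiv:1205.2321 — 2 statements merged into one kernel-verified Lean document; each statement's English description precedes it below -/
import Mathlib

section
/- Let T be a finite tree with deg(T) ≥ 2 and let 0 ≤ λ < 1/(√2·|E(T)|). Then F₁(T)(λ) − F₁(T)(0) = 0, i.e., the boundary map c₁(T) has no nonzero singular values ≤ λ. -/
open scoped RealInnerProductSpace

variable {V E : Type*}

noncomputable def c1 [Fintype E] [DecidableEq V] (v0 v1 : E → V) :
    EuclideanSpace ℝ E →ₗ[ℝ] EuclideanSpace ℝ V where
  toFun a := WithLp.toLp 2 (fun v =>
    (∑ e ∈ Finset.univ.filter (fun e => v1 e = v), a e)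
      - (∑ e ∈ Finset.univ.filter (fun e => v0 e = v), a e))
  map_add' a b := by
    ext v
    simp [PiLp.add_apply, Finset.sum_add_distrib] <;>
    ring
  map_smul' c a := by
    ext v
    simp [PiLp.smul_apply, smul_eq_mul, ← Finset.mul_sum, mul_sub]

/-- Spectral density function of a linear map of inner product spaces. -/
noncomputable def sdf {V W : Type*} [NormedAddCommGroup V] [InnerProductSpace ℝ V]
    [NormedAddCommGroup W] [InnerProductSpace ℝ W]
    (f : V →ₗ[ℝ] W) (lam : ℝ) : ℕ :=
  sSup {n : ℕ | ∃ U : Submodule ℝ V, Module.finrank ℝ U = n ∧ ∀ v ∈ U, ‖f v‖ ≤ lam * ‖v‖}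

/-- Degree of a vertex in a finite directed multigraph (loops count twice). -/
def vdeg [Fintype E] [DecidableEq V] (v0 v1 : E → V) (v : V) : ℕ :=
  (Finset.univ.filter fun e => v0 e = v).card + (Finset.univ.filter fun e => v1 e = v).card

/-- Maximal vertex degree of a finite multigraph. -/
def maxDeg [Fintype V] [Fintype E] [DecidableEq V] (v0 v1 : E → V) : ℕ :=
  Finset.univ.sup (vdeg v0 v1)

/-- The simple graph underlying a directed multigraph. -/
def supportGraph (v0 v1 : E → V) : SimpleGraph V where
  Adj u w := u ≠ w ∧ ∃ e, (v0 e = u ∧ v1 e = w) ∨ (v0 e = w ∧ v1 e = u)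
  symm := by
    constructor
    rintro u w ⟨h, e, he⟩
    exact ⟨h.symm, e, he.symm⟩
  loopless := by constructor; rintro u ⟨h, _⟩; exact h rfl


section Aux

variable {V E : Type*}

private lemma reachable_trans_of_adj {G H : SimpleGraph V}
    (h : ∀ a b, G.Adj a b → H.Reachable a b) {u v : V}
    (huv : G.Reachable u v) : H.Reachable u v := by
  obtain ⟨p⟩ := huv
  induction p with
  | nil => exact SimpleGraph.Reachable.refl _
  | cons hadj p ih => exact (h _ _ hadj).trans ih

/-- Every edge of a (multigraph) tree is a bridge: there is a cut. -/
private lemma exists_cut [Fintype V] [Fintype E] (v0 v1 : E → V)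
    (hconn : (supportGraph v0 v1).Connected)
    (hcard : Fintype.card V = Fintype.card E + 1) (e : E) :
    ∃ S : Set V, v0 e ∈ S ∧ v1 e ∉ S ∧ ∀ f, f ≠ e → (v0 f ∈ S ↔ v1 f ∈ S) := by
  classical
  let G' : SimpleGraph V :=
    { Adj := fun u w => u ≠ w ∧ ∃ f, f ≠ e ∧ ((v0 f = u ∧ v1 f = w) ∨ (v0 f = w ∧ v1 f = u))
      symm := by constructor; rintro u w ⟨h, f, hf, hc⟩; exact ⟨h.symm, f, hf, hc.symm⟩
      loopless := by constructor; rintro u ⟨h, _⟩; exact h rfl }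
  refine ⟨{v | G'.Reachable (v0 e) v}, SimpleGraph.Reachable.refl _, ?_, ?_⟩
  · -- v1 e is not reachable without e
    intro hreach
    simp only [Set.mem_setOf_eq] at hreach
    -- everything is reachable from the root in G'
    have hall : ∀ v, G'.Reachable (v0 e) v := by
      intro v
      refine reachable_trans_of_adj ?_ (hconn.preconnected (v0 e) v)
      rintro a b ⟨hab, f, hc⟩
      by_cases hf : f = e
      · subst hf
        rcases hc with ⟨h1, h2⟩ | ⟨h1, h2⟩
        · rw [← h1, ← h2]; exact hreach
        · rw [← h1, ← h2]; exact hreach.symm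
      · exact SimpleGraph.Adj.reachable ⟨hab, f, hf, hc⟩
    -- for each vertex except the root, pick an edge going strictly closer to root
    have key : ∀ v, v ≠ v0 e → ∃ u f, f ≠ e ∧
        ((v0 f = v ∧ v1 f = u) ∨ (v0 f = u ∧ v1 f = v)) ∧
        G'.dist (v0 e) u < G'.dist (v0 e) v := by
      intro v hv
      have hr : G'.Reachable (v0 e) v := hall v
      obtain ⟨p, hp⟩ := hr.exists_walk_length_eq_dist
      have hd0 : G'.dist (v0 e) v ≠ 0 := by
        intro h
        rcases SimpleGraph.dist_eq_zero_iff_eq_or_not_reachable.mp h with h' | h'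
        · exact hv h'.symm
        · exact h' hr
      cases hq' : p.reverse with
      | nil =>
          exfalso
          have h2 := congrArg SimpleGraph.Walk.length hq'
          rw [SimpleGraph.Walk.length_reverse, hp] at h2
          exact hd0 h2
      | cons hadj q =>
          rename_i u
          obtain ⟨hneq, f, hf, hc⟩ := hadj
          refine ⟨u, f, hf, ?_, ?_⟩
          · rcases hc with ⟨h1, h2⟩ | ⟨h1, h2⟩
            · exact Or.inl ⟨h1, h2⟩
            · exact Or.inr ⟨h1, h2⟩
          · have hlen : q.length + 1 = G'.dist (v0 e) v := by
              have h2 := congrArg SimpleGraph.Walk.length hq'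
              rw [SimpleGraph.Walk.length_reverse, hp, SimpleGraph.Walk.length_cons] at h2
              omega
            have h2 : G'.dist (v0 e) u ≤ q.reverse.length := SimpleGraph.dist_le _
            rw [SimpleGraph.Walk.length_reverse] at h2
            omega
    choose u g hg hcase hlt using key
    -- the map v ↦ g v is an injection from V \ {root} to E \ {e}
    have hinj : Set.InjOn (fun v : V => if h : v ≠ v0 e then g v h else e)
        ((Finset.univ.erase (v0 e)) : Finset V) := by
      intro x hx y hy hxy
      simp only [Finset.coe_erase, Set.mem_diff, Set.mem_singleton_iff,
        Finset.coe_univ] at hx hy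
      have hx' : x ≠ v0 e := hx.2
      have hy' : y ≠ v0 e := hy.2
      simp only [dif_pos hx', dif_pos hy'] at hxy
      by_contra hne
      have hcx := hcase x hx'
      have hcy := hcase y hy'
      rw [hxy] at hcx
      have hux : u x hx' = y ∧ u y hy' = x := by
        rcases hcx with ⟨ha1, ha2⟩ | ⟨ha1, ha2⟩ <;>
          rcases hcy with ⟨hb1, hb2⟩ | ⟨hb1, hb2⟩
        · exact absurd (ha1.symm.trans hb1) hne
        · exact ⟨ha2.symm.trans hb2, hb1.symm.trans ha1⟩
        · exact ⟨ha1.symm.trans hb1, hb2.symm.trans ha2⟩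
        · exact absurd (ha2.symm.trans hb2) hne
      have h1 := hlt x hx'
      have h2 := hlt y hy'
      rw [hux.1] at h1
      rw [hux.2] at h2
      omega
    have hcard2 : (Finset.univ.erase (v0 e)).card ≤ (Finset.univ.erase e).card := by
      apply Finset.card_le_card_of_injOn _ _ hinj
      intro x hx
      have hx' : x ≠ v0 e := (Finset.mem_erase.mp hx).1
      simp only [dif_pos hx']
      exact Finset.mem_erase.mpr ⟨hg x hx', Finset.mem_univ _⟩
    rw [Finset.card_erase_of_mem (Finset.mem_univ _),
        Finset.card_erase_of_mem (Finset.mem_univ _), Finset.card_univ,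
        Finset.card_univ, hcard] at hcard2
    have hE : 1 ≤ Fintype.card E := Fintype.card_pos_iff.mpr ⟨e⟩
    omega
  · intro f hf
    by_cases hvv : v0 f = v1 f
    · rw [hvv]
    · have hadj : G'.Adj (v0 f) (v1 f) := ⟨hvv, f, hf, Or.inl ⟨rfl, rfl⟩⟩
      simp only [Set.mem_setOf_eq]
      exact ⟨fun h => h.trans hadj.reachable, fun h => h.trans hadj.symm.reachable⟩

private lemma sum_cut [Fintype E] [Fintype V] [DecidableEq V] (v0 v1 : E → V)
    (a : EuclideanSpace ℝ E) (e : E) (S : Set V) [DecidablePred (· ∈ S)]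
    (h0 : v0 e ∈ S) (h1 : v1 e ∉ S)
    (hcut : ∀ f, f ≠ e → (v0 f ∈ S ↔ v1 f ∈ S)) :
    ∑ v ∈ Finset.univ.filter (· ∈ S), (c1 v0 v1 a) v = - a e := by
  classical
  have hc1 : ∀ v, (c1 v0 v1 a) v =
      (∑ f ∈ Finset.univ.filter (fun f => v1 f = v), a f)
        - (∑ f ∈ Finset.univ.filter (fun f => v0 f = v), a f) := fun v => rfl
  simp only [hc1]
  rw [Finset.sum_sub_distrib,
    Finset.sum_fiberwise_eq_sum_filter Finset.univ (Finset.univ.filter (· ∈ S)) v1 a,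
    Finset.sum_fiberwise_eq_sum_filter Finset.univ (Finset.univ.filter (· ∈ S)) v0 a]
  simp only [Finset.mem_filter, Finset.mem_univ, true_and]
  rw [Finset.sum_filter, Finset.sum_filter, ← Finset.sum_sub_distrib]
  rw [Finset.sum_eq_single e]
  · simp [h0, h1]
  · intro f _ hf
    by_cases hmem : v0 f ∈ S
    · simp [hmem, (hcut f hf).mp hmem]
    · have hm2 : v1 f ∉ S := fun h => hmem ((hcut f hf).mpr h)
      simp [hmem, hm2]
  · intro h
    exact absurd (Finset.mem_univ e) h


private lemma norm_le_bound {V E : Type*} [Fintype V] [Fintype E] [DecidableEq V]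
    (v0 v1 : E → V) (hconn : (supportGraph v0 v1).Connected)
    (hcard : Fintype.card V = Fintype.card E + 1) (hE : 1 ≤ Fintype.card E)
    (a : EuclideanSpace ℝ E) :
    ‖a‖ ≤ Real.sqrt 2 * (Fintype.card E : ℝ) * ‖c1 v0 v1 a‖ := by
  classical
  set b := c1 v0 v1 a with hb
  have key : ∀ e : E, (a e)^2 ≤ (Fintype.card V : ℝ) * ∑ v, (b v)^2 := by
    intro e
    obtain ⟨S, h0, h1, hcut⟩ := exists_cut v0 v1 hconn hcard e
    haveI : DecidablePred (· ∈ S) := Classical.decPred _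
    have hsum := sum_cut v0 v1 a e S h0 h1 hcut
    have habs : |a e| ≤ ∑ v, |b v| := by
      calc |a e| = |∑ v ∈ Finset.univ.filter (· ∈ S), b v| := by
            rw [hsum, abs_neg]
      _ ≤ ∑ v ∈ Finset.univ.filter (· ∈ S), |b v| := Finset.abs_sum_le_sum_abs _ _
      _ ≤ ∑ v, |b v| := Finset.sum_le_sum_of_subset_of_nonneg
            (Finset.filter_subset _ _) (fun _ _ _ => abs_nonneg _)
    calc (a e)^2 = |a e|^2 := (sq_abs _).symm
    _ ≤ (∑ v, |b v|)^2 := pow_le_pow_left₀ (abs_nonneg _) habs 2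
    _ ≤ ((Finset.univ : Finset V).card : ℝ) * ∑ v, |b v|^2 := sq_sum_le_card_mul_sum_sq
    _ = (Fintype.card V : ℝ) * ∑ v, (b v)^2 := by simp [Finset.card_univ, sq_abs]
  have ha2 : ‖a‖^2 = ∑ e, (a e)^2 := by
    rw [EuclideanSpace.norm_eq, Real.sq_sqrt (by positivity)]
    simp [sq_abs]
  have hb2 : ‖b‖^2 = ∑ v, (b v)^2 := by
    rw [EuclideanSpace.norm_eq, Real.sq_sqrt (by positivity)]
    simp [sq_abs]
  have hVE : (Fintype.card V : ℝ) ≤ 2 * (Fintype.card E : ℝ) := by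
    rw [hcard]
    push_cast
    have : (1 : ℝ) ≤ (Fintype.card E : ℝ) := by exact_mod_cast hE
    linarith
  have hsumb : (0:ℝ) ≤ ∑ v, (b v)^2 := Finset.sum_nonneg fun _ _ => sq_nonneg _
  have hnormsq : ‖a‖^2 ≤ 2 * (Fintype.card E : ℝ)^2 * ‖b‖^2 := by
    rw [ha2, hb2]
    calc ∑ e, (a e)^2 ≤ ∑ _e : E, (Fintype.card V : ℝ) * ∑ v, (b v)^2 :=
          Finset.sum_le_sum fun e _ => key e
    _ = (Fintype.card E : ℝ) * ((Fintype.card V : ℝ) * ∑ v, (b v)^2) := by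
          rw [Finset.sum_const, Finset.card_univ, nsmul_eq_mul]
    _ ≤ (Fintype.card E : ℝ) * (2 * (Fintype.card E : ℝ) * ∑ v, (b v)^2) := by
          apply mul_le_mul_of_nonneg_left _ (by positivity)
          exact mul_le_mul_of_nonneg_right hVE hsumb
    _ = 2 * (Fintype.card E : ℝ)^2 * ∑ v, (b v)^2 := by ring
  have hsq := Real.sqrt_le_sqrt hnormsq
  rw [Real.sqrt_sq (norm_nonneg _)] at hsq
  have hrhs : Real.sqrt (2 * (Fintype.card E : ℝ)^2 * ‖b‖^2)
      = Real.sqrt 2 * (Fintype.card E : ℝ) * ‖b‖ := by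
    rw [Real.sqrt_mul (by positivity), Real.sqrt_mul (by norm_num : (0:ℝ) ≤ 2),
      Real.sqrt_sq (by positivity), Real.sqrt_sq (norm_nonneg _)]
  rw [hrhs] at hsq
  exact hsq

end Aux

/-- For a finite tree T with deg(T) ≥ 2 and 0 ≤ λ < 1/(√2·|E(T)|),
the first spectral density function satisfies F₁(T)(λ) − F₁(T)(0) = 0. -/
theorem tree_sdf_small_lambda {V E : Type*} [Fintype V] [Fintype E] [DecidableEq V]
    (v0 v1 : E → V) (hconn : (supportGraph v0 v1).Connected)
    (hcard : Fintype.card V = Fintype.card E + 1)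
    (hdeg : 2 ≤ maxDeg v0 v1) (lam : ℝ) (h0 : 0 ≤ lam)
    (h1 : lam < 1 / (Real.sqrt 2 * (Fintype.card E : ℝ))) :
    sdf (c1 v0 v1) lam = sdf (c1 v0 v1) 0 := by
  classical
  have hE : 1 ≤ Fintype.card E := by
    rcases Nat.eq_zero_or_pos (Fintype.card E) with h | h
    · exfalso
      rw [h] at h1
      simp at h1
      linarith
    · exact h
  have hCpos : (0:ℝ) < Real.sqrt 2 * (Fintype.card E : ℝ) := by
    have : (1 : ℝ) ≤ (Fintype.card E : ℝ) := by exact_mod_cast hE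
    positivity
  have main : ∀ mu : ℝ, mu ≤ lam → sdf (c1 v0 v1) mu = 0 := by
    intro mu hmu
    have hset : {n : ℕ | ∃ U : Submodule ℝ (EuclideanSpace ℝ E),
        Module.finrank ℝ U = n ∧ ∀ v ∈ U, ‖c1 v0 v1 v‖ ≤ mu * ‖v‖} = {0} := by
      ext n
      simp only [Set.mem_setOf_eq, Set.mem_singleton_iff]
      constructor
      · rintro ⟨U, hU, hbound⟩
        have hbot : U = ⊥ := by
          rw [Submodule.eq_bot_iff]
          intro x hx
          by_contra hx0
          have hb := hbound x hx
          have hlow := norm_le_bound v0 v1 hconn hcard hE x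
          have hxpos : 0 < ‖x‖ := norm_pos_iff.mpr hx0
          have h2 : ‖x‖ / (Real.sqrt 2 * (Fintype.card E : ℝ)) ≤ ‖c1 v0 v1 x‖ := by
            rw [div_le_iff₀ hCpos]
            nlinarith [hlow]
          have h3 : mu * ‖x‖ < ‖x‖ / (Real.sqrt 2 * (Fintype.card E : ℝ)) := by
            rw [lt_div_iff₀ hCpos]
            have hlt : lam * (Real.sqrt 2 * (Fintype.card E : ℝ)) < 1 := by
              rw [← lt_div_iff₀ hCpos]
              exact h1
            have hle : mu * (Real.sqrt 2 * (Fintype.card E : ℝ))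
                ≤ lam * (Real.sqrt 2 * (Fintype.card E : ℝ)) :=
              mul_le_mul_of_nonneg_right hmu hCpos.le
            nlinarith
          linarith
        rw [hbot] at hU
        rw [← hU, finrank_bot]
      · rintro rfl
        refine ⟨⊥, finrank_bot _ _, ?_⟩
        intro v hv
        rw [Submodule.mem_bot] at hv
        simp [hv]
    rw [sdf, hset, csSup_singleton]
  rw [main lam le_rfl, main 0 h0]
end

section
/- Let T be a finite tree with deg(T) ≥ 2 and let λ satisfy 1/(2·(|E(T)|−1)·deg(T)) ≤ λ < 1. Then F₁(T)(λ) − F₁(T)(0) ≤ 2·|E(T)|·deg(T)·λ. -/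
set_option linter.unusedSectionVars false
set_option linter.unusedVariables false
set_option linter.unreachableTactic false
set_option linter.unusedTactic false
set_option maxHeartbeats 1000000



open scoped RealInnerProductSpace

variable {V E : Type*}

open Finset Function

section Forest
variable {V : Type*} [Fintype V] [DecidableEq V]

/-- Validity of a parent/depth structure: every vertex is a root or its parent has
smaller depth. -/
def FValid (par : V → V) (dep : V → ℕ) : Prop := ∀ v, par v = v ∨ dep (par v) < dep v

def children (par : V → V) (v : V) : Finset V := univ.filter (fun w => par w = v ∧ w ≠ v)

open Classical in
noncomputable def below (par : V → V) (u : V) : Finset V :=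
  univ.filter (fun v => ∃ j, par^[j] v = u)

noncomputable def rootOf (par : V → V) (dep : V → ℕ) (v : V) : V := par^[dep v] v

open Classical in
noncomputable def fiber (par : V → V) (dep : V → ℕ) (ρ : V) : Finset V :=
  univ.filter (fun v => rootOf par dep v = ρ)

def cutF (K : Finset V) (par : V → V) : V → V := fun v => if v ∈ K then v else par v

variable {par : V → V} {dep : V → ℕ}

lemma mem_below {u v : V} : v ∈ below par u ↔ ∃ j, par^[j] v = u := by
  simp [below]

lemma self_mem_below (u : V) : u ∈ below par u := mem_below.2 ⟨0, rfl⟩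

lemma mem_below_of_par {u v : V} (h : par v ∈ below par u) : v ∈ below par u := by
  obtain ⟨j, hj⟩ := mem_below.1 h
  exact mem_below.2 ⟨j + 1, by rw [Function.iterate_succ_apply]; exact hj⟩

lemma below_trans {u v : V} (h : v ∈ below par u) : below par v ⊆ below par u := by
  intro z hz
  obtain ⟨i, hi⟩ := mem_below.1 hz
  obtain ⟨j, hj⟩ := mem_below.1 h
  exact mem_below.2 ⟨j + i, by rw [Function.iterate_add_apply, hi]; exact hj⟩

lemma stable_aux (hv : FValid par dep) :
    ∀ (n : ℕ) (v : V), dep v ≤ n →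
      (∀ j, dep v ≤ j → par^[j] v = par^[dep v] v) ∧ par (par^[dep v] v) = par^[dep v] v := by
  intro n
  induction n with
  | zero =>
    intro v hv0
    rcases hv v with h | h
    · exact ⟨fun j _ => by rw [Function.iterate_fixed h, Function.iterate_fixed h], by
        rw [Function.iterate_fixed h]; exact h⟩
    · omega
  | succ n ih =>
    intro v hdep
    rcases hv v with h | h
    · exact ⟨fun j _ => by rw [Function.iterate_fixed h, Function.iterate_fixed h], by
        rw [Function.iterate_fixed h]; exact h⟩
    · have hw : dep (par v) ≤ n := by omega
      obtain ⟨ih1, ih2⟩ := ih (par v) hw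
      have key : ∀ j, dep v ≤ j → par^[j] v = par^[dep (par v)] (par v) := by
        intro j hj
        have hj1 : 1 ≤ j := by omega
        have : par^[j] v = par^[j-1] (par v) := by
          conv_lhs => rw [show j = (j-1) + 1 by omega]
          rw [Function.iterate_succ_apply]
        rw [this, ih1 (j-1) (by omega)]
      have hdv : par^[dep v] v = par^[dep (par v)] (par v) := key _ le_rfl
      refine ⟨fun j hj => by rw [key j hj, hdv], ?_⟩
      rw [hdv]; exact ih2

lemma rootOf_fix (hv : FValid par dep) (v : V) : par (rootOf par dep v) = rootOf par dep v :=
  (stable_aux hv (dep v) v le_rfl).2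

lemma iterate_ge (hv : FValid par dep) {v : V} {j : ℕ} (hj : dep v ≤ j) :
    par^[j] v = rootOf par dep v :=
  (stable_aux hv (dep v) v le_rfl).1 j hj

lemma rootOf_root (hv : FValid par dep) {v : V} (h : par v = v) : rootOf par dep v = v := by
  unfold rootOf; rw [Function.iterate_fixed h]

lemma rootOf_par (hv : FValid par dep) (v : V) : rootOf par dep (par v) = rootOf par dep v := by
  rcases hv v with h | h
  · rw [h]
  · have h1 : 1 ≤ dep v := by omega
    have : par^[dep v] v = par^[dep v - 1] (par v) := by
      conv_lhs => rw [show dep v = (dep v - 1) + 1 by omega]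
      rw [Function.iterate_succ_apply]
    have h2 : dep (par v) ≤ dep v - 1 := by omega
    calc rootOf par dep (par v) = par^[dep v - 1] (par v) := (iterate_ge hv h2).symm
    _ = par^[dep v] v := this.symm
    _ = rootOf par dep v := rfl

lemma rootOf_iterate (hv : FValid par dep) (v : V) (j : ℕ) :
    rootOf par dep (par^[j] v) = rootOf par dep v := by
  induction j generalizing v with
  | zero => rfl
  | succ n ih =>
    rw [Function.iterate_succ_apply, ih (par v), rootOf_par hv]

lemma rootOf_eq_of_mem_below (hv : FValid par dep) {u v : V} (h : v ∈ below par u) :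
    rootOf par dep u = rootOf par dep v := by
  obtain ⟨j, hj⟩ := mem_below.1 h
  rw [← hj, rootOf_iterate hv]

lemma dep_iterate_le (hv : FValid par dep) (v : V) (j : ℕ) : dep (par^[j] v) ≤ dep v := by
  induction j generalizing v with
  | zero => exact le_rfl
  | succ n ih =>
    rw [Function.iterate_succ_apply]
    refine le_trans (ih (par v)) ?_
    rcases hv v with h | h
    · rw [h]
    · omega

lemma dep_le_of_mem_below (hv : FValid par dep) {u v : V} (h : v ∈ below par u) :
    dep u ≤ dep v := by
  obtain ⟨j, hj⟩ := mem_below.1 h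
  rw [← hj]; exact dep_iterate_le hv v j

lemma par_not_mem_below (hv : FValid par dep) {u : V} (h : par u ≠ u) :
    par u ∉ below par u := by
  intro hm
  have := dep_le_of_mem_below hv hm
  rcases hv u with h' | h'
  · exact h h'
  · omega

lemma mem_below_iff_par (hv : FValid par dep) {u v : V} (hne : v ≠ u) :
    v ∈ below par u ↔ par v ∈ below par u := by
  constructor
  · intro h
    obtain ⟨j, hj⟩ := mem_below.1 h
    cases j with
    | zero => exact absurd hj hne
    | succ i => exact mem_below.2 ⟨i, by rw [← Function.iterate_succ_apply]; exact hj⟩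
  · exact mem_below_of_par



/-- Minimal chain length to an element below. -/
lemma exists_min_chain {u v : V} (h : v ∈ below par u) :
    ∃ j, par^[j] v = u ∧ ∀ i < j, par^[i] v ≠ u := by
  classical
  have hex : ∃ j, par^[j] v = u := mem_below.1 h
  exact ⟨Nat.find hex, Nat.find_spec hex, fun i hi => Nat.find_min hex hi⟩

lemma exists_child_of_mem_below {u v : V} (h : v ∈ below par u) (hne : v ≠ u) :
    ∃ c ∈ children par u, v ∈ below par c := by
  obtain ⟨j, hj, hmin⟩ := exists_min_chain h
  have hj0 : j ≠ 0 := by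
    intro h0; rw [h0] at hj; exact hne hj
  set c := par^[j-1] v with hc
  have hpc : par c = u := by
    rw [hc, ← Function.iterate_succ_apply' par (j-1) v, show (j-1).succ = j by omega, hj]
  have hcu : c ≠ u := hmin (j-1) (by omega)
  refine ⟨c, ?_, mem_below.2 ⟨j-1, rfl⟩⟩
  simp [children, hpc, hcu]

lemma iterate_of_child {u c : V} (hu : par u = u) (hc : par c = u) (t : ℕ) :
    par^[t] c = c ∨ par^[t] c = u := by
  cases t with
  | zero => exact Or.inl rfl
  | succ n => right; rw [Function.iterate_succ_apply, hc, Function.iterate_fixed hu]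

lemma disjoint_below_children {ρ : V} (hρ : par ρ = ρ) {c c' : V}
    (hc : c ∈ children par ρ) (hc' : c' ∈ children par ρ) (hne : c ≠ c') :
    Disjoint (below par c) (below par c') := by
  simp only [children, mem_filter] at hc hc'
  rw [Finset.disjoint_left]
  intro v hvc hvc'
  obtain ⟨i, hi⟩ := mem_below.1 hvc
  obtain ⟨i', hi'⟩ := mem_below.1 hvc'
  rcases le_total i i' with hle | hle
  · have : par^[i'-i] c = c' := by
      rw [← hi, ← Function.iterate_add_apply, show i'-i+i = i' by omega, hi']
    rcases iterate_of_child hρ hc.2.1 (i'-i) with h | h <;> rw [this] at h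
    · exact hne h.symm
    · exact hc'.2.2 h
  · have : par^[i-i'] c' = c := by
      rw [← hi', ← Function.iterate_add_apply, show i-i'+i' = i by omega, hi]
    rcases iterate_of_child hρ hc'.2.1 (i-i') with h | h <;> rw [this] at h
    · exact hne h
    · exact hc.2.2 h

lemma below_root_subset {ρ : V} (hρ : par ρ = ρ) :
    below par ρ ⊆ insert ρ ((children par ρ).biUnion (below par)) := by
  intro v hv
  by_cases hvρ : v = ρ
  · simp [hvρ]
  · obtain ⟨c, hc, hvc⟩ := exists_child_of_mem_below hv hvρ
    exact Finset.mem_insert_of_mem (Finset.mem_biUnion.2 ⟨c, hc, hvc⟩)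

lemma card_below_root_le {ρ : V} (hρ : par ρ = ρ) {s : ℕ}
    (hch : ∀ c ∈ children par ρ, (below par c).card ≤ s) :
    (below par ρ).card ≤ 1 + (children par ρ).card * s := by
  calc (below par ρ).card ≤ (insert ρ ((children par ρ).biUnion (below par))).card :=
        Finset.card_le_card (below_root_subset hρ)
  _ ≤ 1 + ((children par ρ).biUnion (below par)).card := by
      rw [add_comm]; exact Finset.card_insert_le _ _
  _ ≤ 1 + ∑ c ∈ children par ρ, (below par c).card := by
      gcongr; exact Finset.card_biUnion_le
  _ ≤ 1 + (children par ρ).card * s := by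
      gcongr
      exact le_trans (Finset.sum_le_sum hch) (by rw [Finset.sum_const, smul_eq_mul])

lemma mem_fiber {ρ v : V} : v ∈ fiber par dep ρ ↔ rootOf par dep v = ρ := by
  simp [fiber]

lemma fiber_root_eq_below (hv : FValid par dep) {ρ : V} (hρ : par ρ = ρ) :
    fiber par dep ρ = below par ρ := by
  ext v
  rw [mem_fiber, mem_below]
  constructor
  · intro h; exact ⟨dep v, h⟩
  · intro ⟨j, hj⟩
    have := rootOf_iterate hv v j
    rw [hj, rootOf_root hv hρ] at this
    exact this.symm

lemma fiber_nonroot_empty (hv : FValid par dep) {ρ : V} (hρ : par ρ ≠ ρ) :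
    fiber par dep ρ = ∅ := by
  rw [Finset.eq_empty_iff_forall_notMem]
  intro v hvm
  rw [mem_fiber] at hvm
  exact hρ (by rw [← hvm]; exact rootOf_fix hv v)

-- cut lemmas
lemma cutF_valid (K : Finset V) (hv : FValid par dep) : FValid (cutF K par) dep := by
  intro v
  unfold cutF
  split
  · exact Or.inl rfl
  · exact hv v

lemma cutF_nonroot_iff (K : Finset V) (hK : ∀ u ∈ K, par u ≠ u) (v : V) :
    cutF K par v ≠ v ↔ (v ∉ K ∧ par v ≠ v) := by
  unfold cutF
  by_cases h : v ∈ K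
  · simp [h]
  · simp [h]

lemma below_cutF_subset (K : Finset V) (u : V) : below (cutF K par) u ⊆ below par u := by
  have aux : ∀ (j : ℕ) (v : V), (cutF K par)^[j] v = u → v ∈ below par u := by
    intro j
    induction j with
    | zero => intro v hj; rw [← hj]; exact self_mem_below v
    | succ n ih =>
      intro v hj
      rw [Function.iterate_succ_apply] at hj
      by_cases hvK : v ∈ K
      · have hcv : cutF K par v = v := by simp [cutF, hvK]
        rw [hcv] at hj; exact ih v hj
      · have hcv : cutF K par v = par v := by simp [cutF, hvK]
        rw [hcv] at hj; exact mem_below_of_par (ih (par v) hj)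
  intro v hv
  obtain ⟨j, hj⟩ := mem_below.1 hv
  exact aux j v hj

lemma cutF_iterate_eq (K : Finset V) {v : V} {j : ℕ}
    (h : ∀ i < j, par^[i] v ∉ K) : (cutF K par)^[j] v = par^[j] v := by
  induction j generalizing v with
  | zero => rfl
  | succ n ih =>
    rw [Function.iterate_succ_apply, Function.iterate_succ_apply]
    have h0 : v ∉ K := h 0 (by omega) 
    have : cutF K par v = par v := by simp [cutF, h0]
    rw [this]
    exact ih fun i hi => by
      have := h (i+1) (by omega)
      rwa [Function.iterate_succ_apply] at this

lemma children_cutF_subset (K : Finset V) (v : V) :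
    children (cutF K par) v ⊆ children par v := by
  intro w hw
  simp only [children, mem_filter] at hw ⊢
  refine ⟨Finset.mem_univ w, ?_, hw.2.2⟩
  have := hw.2.1
  unfold cutF at this
  split at this
  · exact absurd this hw.2.2
  · exact this

lemma cutF_cutF (K K' : Finset V) : cutF K' (cutF K par) = cutF (K ∪ K') par := by
  funext v
  unfold cutF
  by_cases h1 : v ∈ K' <;> by_cases h2 : v ∈ K <;> simp [h1, h2]


-- CHUNK3: greedy
lemma cutF_empty : cutF (∅ : Finset V) par = par := by
  funext v; simp [cutF]

lemma greedy (dep : V → ℕ) (d s : ℕ) (hs : 1 ≤ s) :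
    ∀ (N : ℕ) (par : V → V), FValid par dep →
      (univ.filter (fun v => par v ≠ v)).card ≤ N →
      (∀ v, (children par v).card + (if par v = v then 0 else 1) ≤ d) →
      ∃ K : Finset V, (∀ u ∈ K, par u ≠ u) ∧
        (∀ u ∈ K, s ≤ (fiber (cutF K par) dep u).card) ∧
        (∀ ρ, (fiber (cutF K par) dep ρ).card ≤ 1 + d * (s-1)) := by
  intro N
  induction N with
  | zero =>
    intro par hvalid hcard hdeg
    refine ⟨∅, by simp, by simp, ?_⟩
    rw [cutF_empty]
    intro ρ
    by_cases hρ : par ρ = ρ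
    · rw [fiber_root_eq_below hvalid hρ]
      have hch : ∀ c ∈ children par ρ, (below par c).card ≤ s - 1 := by
        intro c hc
        simp only [children, mem_filter] at hc
        exfalso
        have : c ∈ univ.filter (fun v => par v ≠ v) := by
          simp only [mem_filter, mem_univ, true_and]
          rw [hc.2.1]; exact fun h => hc.2.2 h.symm
        have h0 : (univ.filter (fun v => par v ≠ v)).card = 0 := by omega
        rw [Finset.card_eq_zero] at h0
        rw [h0] at this
        exact absurd this (Finset.notMem_empty c)
      calc (below par ρ).card ≤ 1 + (children par ρ).card * (s-1) :=
            card_below_root_le hρ hch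
      _ ≤ 1 + d * (s-1) := by
          gcongr
          have := hdeg ρ; simp [hρ] at this; exact this
    · rw [fiber_nonroot_empty hvalid hρ]; simp
  | succ N ih =>
    intro par hvalid hcard hdeg
    by_cases hterm : ∀ v, par v ≠ v → (below par v).card < s
    · -- terminal case: K = ∅
      refine ⟨∅, by simp, by simp, ?_⟩
      rw [cutF_empty]
      intro ρ
      by_cases hρ : par ρ = ρ
      · rw [fiber_root_eq_below hvalid hρ]
        have hch : ∀ c ∈ children par ρ, (below par c).card ≤ s - 1 := by
          intro c hc
          simp only [children, mem_filter] at hc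
          have hcnr : par c ≠ c := by rw [hc.2.1]; exact fun h => hc.2.2 h.symm
          have := hterm c hcnr; omega
        calc (below par ρ).card ≤ 1 + (children par ρ).card * (s-1) :=
              card_below_root_le hρ hch
        _ ≤ 1 + d * (s-1) := by
            gcongr
            have := hdeg ρ; simp [hρ] at this; exact this
      · rw [fiber_nonroot_empty hvalid hρ]; simp
    · push_neg at hterm
      obtain ⟨v₀, hv₀nr, hv₀s⟩ := hterm
      -- select u of maximal depth among candidates
      have hSne : (univ.filter (fun v => par v ≠ v ∧ s ≤ (below par v).card)).Nonempty :=
        ⟨v₀, by simp [hv₀nr, hv₀s]⟩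
      obtain ⟨u, huS, humax⟩ := Finset.exists_max_image _ dep hSne
      simp only [mem_filter, mem_univ, true_and] at huS
      obtain ⟨hunr, hus⟩ := huS
      set par₁ := cutF {u} par with hpar₁
      have hvalid₁ : FValid par₁ dep := cutF_valid {u} hvalid
      have hKu : ∀ w ∈ ({u} : Finset V), par w ≠ w := by simpa using hunr
      have hpar₁u : par₁ u = u := by simp [hpar₁, cutF]
      have hnr₁ : ∀ v, par₁ v ≠ v ↔ (v ≠ u ∧ par v ≠ v) := by
        intro v
        rw [cutF_nonroot_iff {u} hKu v]
        simp
      have hfilter₁ : univ.filter (fun v => par₁ v ≠ v)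
          = (univ.filter (fun v => par v ≠ v)).erase u := by
        ext v
        simp only [mem_filter, mem_univ, true_and, Finset.mem_erase, hnr₁ v]
      have hcard₁ : (univ.filter (fun v => par₁ v ≠ v)).card ≤ N := by
        rw [hfilter₁]
        have humem : u ∈ univ.filter (fun v => par v ≠ v) := by simp [hunr]
        rw [Finset.card_erase_of_mem humem]
        omega
      have hdeg₁ : ∀ v, (children par₁ v).card + (if par₁ v = v then 0 else 1) ≤ d := by
        intro v
        have hsub := children_cutF_subset (par := par) {u} v
        have hc1 : (children par₁ v).card ≤ (children par v).card :=
          Finset.card_le_card hsub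
        by_cases hv : par₁ v = v
        · rw [if_pos hv, add_zero]
          by_cases hpv : par v = v
          · have := hdeg v; simp [hpv] at this; omega
          · have hvu : v = u := by
              by_contra hvu
              have : par₁ v = par v := by simp [hpar₁, cutF, hvu]
              rw [this] at hv; exact hpv hv
            have := hdeg v; rw [if_neg hpv] at this; omega
        · have hpv : par v ≠ v := ((hnr₁ v).1 hv).2
          have := hdeg v; rw [if_neg hpv] at this
          rw [if_neg hv]; omega
      obtain ⟨K₁, hK₁, hKs₁, hfib₁⟩ := ih par₁ hvalid₁ hcard₁ hdeg₁
      have huK₁ : u ∉ K₁ := fun h => (hK₁ u h) hpar₁u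
      set K : Finset V := insert u K₁ with hK
      have hpar₂ : cutF K₁ par₁ = cutF K par := by
        rw [hpar₁, cutF_cutF, hK, Finset.insert_eq]
      set par₂ := cutF K par with hpar₂def
      rw [hpar₂] at hKs₁ hfib₁
      have hKnr : ∀ w ∈ K, par w ≠ w := by
        intro w hw
        rcases Finset.mem_insert.1 hw with h | h
        · rw [h]; exact hunr
        · exact ((hnr₁ w).1 (hK₁ w h)).2
      -- Claim A
      have claimA : ∀ w ∈ K₁, w ∉ below par u := by
        intro w hw hmem
        have hwu : w ≠ u := fun h => huK₁ (h ▸ hw)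
        obtain ⟨c, hc, hwc⟩ := exists_child_of_mem_below hmem hwu
        simp only [children, mem_filter] at hc
        have hcnr : par c ≠ c := by rw [hc.2.1]; exact fun h => hc.2.2 h.symm
        have hdepc : dep u < dep c := by
          have := hvalid c
          rcases this with h | h
          · exact absurd h hcnr
          · rw [hc.2.1] at h; exact h
        have hcs : (below par c).card < s := by
          by_contra hcs
          push_neg at hcs
          have : c ∈ univ.filter (fun v => par v ≠ v ∧ s ≤ (below par v).card) := by
            simp [hcnr, hcs]
          have := humax c this
          omega
        have hsubf : fiber par₂ dep w ⊆ below par c := by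
          intro v hv
          rw [mem_fiber] at hv
          have : v ∈ below par₂ w := mem_below.2 ⟨dep v, hv⟩
          exact below_trans hwc (below_cutF_subset K w this)
        have := hKs₁ w hw
        have := Finset.card_le_card hsubf
        omega
      -- Claim B
      have claimB : below par u ⊆ fiber par₂ dep u := by
        intro v hv
        obtain ⟨j, hj, hmin⟩ := exists_min_chain hv
        have hsteps : ∀ i < j, par^[i] v ∉ K := by
          intro i hi hmem
          rcases Finset.mem_insert.1 hmem with h | h
          · exact hmin i hi h
          · refine claimA _ h (mem_below.2 ⟨j - i, ?_⟩)
            rw [← Function.iterate_add_apply, show j - i + i = j by omega, hj]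
        have hj₂ : par₂^[j] v = u := by
          rw [hpar₂def, cutF_iterate_eq K hsteps, hj]
        have hjdep : j ≤ dep v := by
          have aux : ∀ i, i ≤ j → i + dep (par^[i] v) ≤ dep v := by
            intro i
            induction i with
            | zero => simp
            | succ n ihn =>
              intro hn
              have h1 := ihn (by omega)
              have hnr : par (par^[n] v) ≠ par^[n] v := by
                intro heq
                have : par^[j] v = par^[n] v := by
                  rw [show j = (j - n) + n by omega, Function.iterate_add_apply,
                    Function.iterate_fixed heq]
                rw [hj] at this
                exact hmin n (by omega) this.symm
              have h2 : dep (par^[n+1] v) < dep (par^[n] v) := by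
                rw [Function.iterate_succ_apply']
                rcases hvalid (par^[n] v) with h | h
                · exact absurd h hnr
                · exact h
              omega
          have := aux j le_rfl
          omega
        have hpar₂u : par₂ u = u := by
          simp [hpar₂def, cutF, hK]
        rw [mem_fiber]
        unfold rootOf
        rw [show dep v = (dep v - j) + j by omega, Function.iterate_add_apply, hj₂,
          Function.iterate_fixed hpar₂u]
      refine ⟨K, hKnr, ?_, hfib₁⟩
      intro w hw
      rcases Finset.mem_insert.1 hw with h | h
      · subst h
        exact le_trans hus (Finset.card_le_card claimB)
      · exact hKs₁ w h

lemma greedy_card {par : V → V} {dep : V → ℕ} (hvalid : FValid par dep) (K : Finset V)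
    (hK : ∀ u ∈ K, par u ≠ u) {s : ℕ}
    (hKs : ∀ u ∈ K, s ≤ (fiber (cutF K par) dep u).card) :
    K.card * s ≤ (univ.filter (fun v => par v ≠ v)).card := by
  set par₂ := cutF K par with hpar₂
  have hvalid₂ : FValid par₂ dep := cutF_valid K hvalid
  have hdisj : ∀ u ∈ K, ∀ u' ∈ K, u ≠ u' →
      Disjoint (fiber par₂ dep u) (fiber par₂ dep u') := by
    intro u _ u' _ hne
    rw [Finset.disjoint_left]
    intro v hv hv'
    rw [mem_fiber] at hv hv'
    exact hne (hv ▸ hv')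
  have hsub : K.biUnion (fiber par₂ dep) ⊆ univ.filter (fun v => par v ≠ v) := by
    intro v hv
    obtain ⟨w, hw, hvw⟩ := Finset.mem_biUnion.1 hv
    rw [mem_fiber] at hvw
    simp only [mem_filter, mem_univ, true_and]
    intro hpv
    have hp₂ : par₂ v = v := by
      by_cases hvK : v ∈ K
      · simp [hpar₂, cutF, hvK]
      · simp [hpar₂, cutF, hvK, hpv]
    have := rootOf_root hvalid₂ hp₂
    rw [this] at hvw
    exact hK w hw (hvw ▸ hpv)
  calc K.card * s = ∑ _u ∈ K, s := by rw [Finset.sum_const, smul_eq_mul]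
  _ ≤ ∑ u ∈ K, (fiber par₂ dep u).card := Finset.sum_le_sum hKs
  _ = (K.biUnion (fiber par₂ dep)).card := (Finset.card_biUnion hdisj).symm
  _ ≤ (univ.filter (fun v => par v ≠ v)).card := Finset.card_le_card hsub

end Forest

section Analytic

variable {V E : Type*} [Fintype V] [Fintype E] [DecidableEq V]

lemma c1_apply' (v0 v1 : E → V) (x : EuclideanSpace ℝ E) (v : V) :
    c1 v0 v1 x v = (∑ e ∈ Finset.univ.filter (fun e => v1 e = v), x e)
      - (∑ e ∈ Finset.univ.filter (fun e => v0 e = v), x e) := rfl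

lemma sum_c1_over (v0 v1 : E → V) (x : EuclideanSpace ℝ E) (S : Finset V) :
    ∑ v ∈ S, c1 v0 v1 x v
      = ∑ e ∈ univ, ((if v1 e ∈ S then x e else 0) - (if v0 e ∈ S then x e else 0)) := by
  simp only [c1_apply']
  rw [Finset.sum_sub_distrib, Finset.sum_fiberwise_eq_sum_filter univ S v1 x,
    Finset.sum_fiberwise_eq_sum_filter univ S v0 x, Finset.sum_sub_distrib,
    Finset.sum_filter, Finset.sum_filter]

variable {par : V → V} {dep : V → ℕ}

lemma sum_reindex (ed : V → E)
    (hinj : ∀ v w, par v ≠ v → par w ≠ w → ed v = ed w → v = w)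
    (hsurj : ∀ e, ∃ v, par v ≠ v ∧ ed v = e) (g : E → ℝ) :
    ∑ w ∈ univ.filter (fun v => par v ≠ v), g (ed w) = ∑ e ∈ univ, g e := by
  refine Finset.sum_bij (fun w _ => ed w) (fun w _ => Finset.mem_univ _) ?_ ?_ ?_
  · intro a ha b hb hab
    simp only [mem_filter, mem_univ, true_and] at ha hb
    exact hinj a b ha hb hab
  · intro e _
    obtain ⟨v, hv, hve⟩ := hsurj e
    exact ⟨v, by simp [hv], hve⟩
  · intro a _; rfl

lemma key_identity (hvalid : FValid par dep) (v0 v1 : E → V) (ed : V → E)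
    (hed : ∀ v, par v ≠ v →
      (v0 (ed v) = v ∧ v1 (ed v) = par v) ∨ (v0 (ed v) = par v ∧ v1 (ed v) = v))
    (hinj : ∀ v w, par v ≠ v → par w ≠ w → ed v = ed w → v = w)
    (hsurj : ∀ e, ∃ v, par v ≠ v ∧ ed v = e)
    (K : Finset V) (hK : ∀ u ∈ K, par u ≠ u)
    (x : EuclideanSpace ℝ E) (hx : ∀ u ∈ K, x (ed u) = 0)
    (u : V) (hu : cutF K par u ≠ u) :
    (∑ v ∈ below (cutF K par) u, c1 v0 v1 x v) ^ 2 = (x (ed u))^2 := by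
  set par' := cutF K par with hpar'
  have hvalid' : FValid par' dep := cutF_valid K hvalid
  have huKnr := (cutF_nonroot_iff K hK u).1 hu
  obtain ⟨huK, hunr⟩ := huKnr
  set S := below par' u with hS
  rw [sum_c1_over]
  have hre := sum_reindex ed hinj hsurj
    (fun e => (if v1 e ∈ S then x e else 0) - (if v0 e ∈ S then x e else 0))
  rw [← hre]
  rw [Finset.sum_eq_single_of_mem u (by simp [hunr])]
  · have huS : u ∈ S := self_mem_below u
    have hpuS : par u ∉ S := by
      have h1 : par' u = par u := by simp [hpar', cutF, huK]
      have := par_not_mem_below (par := par') hvalid' hu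
      rwa [h1] at this
    rcases hed u hunr with ⟨h0, h1⟩ | ⟨h0, h1⟩ <;> rw [h0, h1] <;>
      simp [huS, hpuS] <;> ring
  · intro w hw hwu
    simp only [mem_filter, mem_univ, true_and] at hw
    by_cases hwK : w ∈ K
    · simp [hx w hwK]
    · have hpw : par' w = par w := by simp [hpar', cutF, hwK]
      have hmemiff : w ∈ S ↔ par w ∈ S := by
        rw [hS, ← hpw]
        exact mem_below_iff_par hvalid' hwu
      rcases hed w hw with ⟨h0, h1⟩ | ⟨h0, h1⟩ <;> rw [h0, h1] <;>
        by_cases hwS : w ∈ S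
      · rw [if_pos (hmemiff.1 hwS), if_pos hwS]; ring
      · rw [if_neg (fun h => hwS (hmemiff.2 h)), if_neg hwS]; ring
      · rw [if_pos hwS, if_pos (hmemiff.1 hwS)]; ring
      · rw [if_neg hwS, if_neg (fun h => hwS (hmemiff.2 h))]; ring

lemma card_below_le_of_fiber {K : Finset V} (hvalid : FValid par dep) {Q : ℕ}
    (hfib : ∀ ρ, (fiber (cutF K par) dep ρ).card ≤ Q + 1)
    {w : V} (hw : cutF K par w ≠ w) :
    (below (cutF K par) w).card ≤ Q := by
  set par' := cutF K par with hpar'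
  have hvalid' : FValid par' dep := cutF_valid K hvalid
  set ρ := rootOf par' dep w with hρ
  have hsub : below par' w ⊆ (fiber par' dep ρ).erase ρ := by
    intro v hv
    rw [Finset.mem_erase, mem_fiber]
    constructor
    · intro hvρ
      have hfix : par' v = v := by rw [hvρ, hρ]; exact rootOf_fix hvalid' w
      obtain ⟨j, hj⟩ := mem_below.1 hv
      rw [Function.iterate_fixed hfix] at hj
      rw [hj] at hfix
      exact hw hfix
    · exact (rootOf_eq_of_mem_below hvalid' hv).symm
  have h1 : ((fiber par' dep ρ).erase ρ).card ≤ Q := by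
    have hρm : ρ ∈ fiber par' dep ρ := by
      rw [mem_fiber, hρ]
      exact rootOf_root hvalid' (rootOf_fix hvalid' w)
    rw [Finset.card_erase_of_mem hρm]
    have := hfib ρ
    omega
  exact le_trans (Finset.card_le_card hsub) h1

lemma card_anc_le_of_fiber {K : Finset V} (hvalid : FValid par dep) {Q : ℕ}
    (hfib : ∀ ρ, (fiber (cutF K par) dep ρ).card ≤ Q + 1) (v : V) :
    ((univ.filter (fun w => cutF K par w ≠ w)).filter
      (fun w => v ∈ below (cutF K par) w)).card ≤ Q := by
  set par' := cutF K par with hpar'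
  have hvalid' : FValid par' dep := cutF_valid K hvalid
  set ρ := rootOf par' dep v with hρ
  have hsub : (univ.filter (fun w => par' w ≠ w)).filter (fun w => v ∈ below par' w)
      ⊆ (fiber par' dep ρ).erase ρ := by
    intro w hwm
    simp only [mem_filter, mem_univ, true_and] at hwm
    obtain ⟨hwnr, hvw⟩ := hwm
    obtain ⟨j, hj⟩ := mem_below.1 hvw
    rw [Finset.mem_erase, mem_fiber]
    constructor
    · intro hwρ
      have hfix : par' w = w := by rw [hwρ, hρ]; exact rootOf_fix hvalid' v
      exact hwnr hfix
    · rw [← hj, rootOf_iterate hvalid']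
  have hρm : ρ ∈ fiber par' dep ρ := by
    rw [mem_fiber, hρ]
    exact rootOf_root hvalid' (rootOf_fix hvalid' v)
  have h1 : ((fiber par' dep ρ).erase ρ).card ≤ Q := by
    rw [Finset.card_erase_of_mem hρm]
    have := hfib ρ
    omega
  exact le_trans (Finset.card_le_card hsub) h1

lemma energy_bound (hvalid : FValid par dep) (v0 v1 : E → V) (ed : V → E)
    (hed : ∀ v, par v ≠ v →
      (v0 (ed v) = v ∧ v1 (ed v) = par v) ∨ (v0 (ed v) = par v ∧ v1 (ed v) = v))
    (hinj : ∀ v w, par v ≠ v → par w ≠ w → ed v = ed w → v = w)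
    (hsurj : ∀ e, ∃ v, par v ≠ v ∧ ed v = e)
    (K : Finset V) (hK : ∀ u ∈ K, par u ≠ u) (Q : ℕ)
    (hfib : ∀ ρ, (fiber (cutF K par) dep ρ).card ≤ Q + 1)
    (x : EuclideanSpace ℝ E) (hx : ∀ u ∈ K, x (ed u) = 0) :
    ∑ e ∈ univ, (x e)^2 ≤ (Q:ℝ)^2 * ∑ v ∈ univ, (c1 v0 v1 x v)^2 := by
  set par' := cutF K par with hpar'
  have hvalid' : FValid par' dep := cutF_valid K hvalid
  set A' := univ.filter (fun w => par' w ≠ w) with hA'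
  set y : V → ℝ := fun v => c1 v0 v1 x v with hy
  -- step 1: rewrite LHS as sum over A'
  have step1 : ∑ e ∈ univ, (x e)^2 = ∑ w ∈ A', (x (ed w))^2 := by
    rw [← sum_reindex ed hinj hsurj (fun e => (x e)^2)]
    rw [← Finset.sum_filter_add_sum_filter_not (univ.filter (fun v => par v ≠ v))
      (fun w => w ∈ K) (fun w => (x (ed w))^2)]
    have hz : ∑ w ∈ (univ.filter (fun v => par v ≠ v)).filter (fun w => w ∈ K),
        (x (ed w))^2 = 0 := by
      refine Finset.sum_eq_zero fun w hw => ?_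
      simp only [mem_filter] at hw
      rw [hx w hw.2]; ring
    rw [hz, zero_add]
    congr 1
    ext w
    simp only [mem_filter, mem_univ, true_and, hA']
    rw [cutF_nonroot_iff K hK w]
    tauto
  rw [step1]
  -- step 2: bound each term
  have step2 : ∀ w ∈ A', (x (ed w))^2 ≤ (Q:ℝ) * ∑ v ∈ below par' w, (y v)^2 := by
    intro w hw
    simp only [hA', mem_filter, mem_univ, true_and] at hw
    have hid := key_identity hvalid v0 v1 ed hed hinj hsurj K hK x hx w hw
    rw [← hid]
    calc (∑ v ∈ below par' w, c1 v0 v1 x v)^2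
        ≤ (below par' w).card * ∑ v ∈ below par' w, (c1 v0 v1 x v)^2 :=
          sq_sum_le_card_mul_sum_sq
    _ ≤ (Q:ℝ) * ∑ v ∈ below par' w, (y v)^2 := by
        apply mul_le_mul_of_nonneg_right
        · exact_mod_cast card_below_le_of_fiber hvalid hfib hw
        · exact Finset.sum_nonneg fun v _ => sq_nonneg _
  calc ∑ w ∈ A', (x (ed w))^2 ≤ ∑ w ∈ A', (Q:ℝ) * ∑ v ∈ below par' w, (y v)^2 :=
        Finset.sum_le_sum step2
  _ = (Q:ℝ) * ∑ w ∈ A', ∑ v ∈ below par' w, (y v)^2 := by rw [← Finset.mul_sum]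
  _ ≤ (Q:ℝ) * ((Q:ℝ) * ∑ v ∈ univ, (y v)^2) := by
      apply mul_le_mul_of_nonneg_left _ (by positivity)
      -- swap the double sum
      have hswap : ∑ w ∈ A', ∑ v ∈ below par' w, (y v)^2
          = ∑ v ∈ univ, ((A'.filter (fun w => v ∈ below par' w)).card : ℝ) * (y v)^2 := by
        have h1 : ∀ w ∈ A', ∑ v ∈ below par' w, (y v)^2
            = ∑ v ∈ univ, (if v ∈ below par' w then (y v)^2 else 0) := by
          intro w _
          rw [Finset.sum_ite_mem, Finset.univ_inter]
        rw [Finset.sum_congr rfl h1, Finset.sum_comm]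
        refine Finset.sum_congr rfl fun v _ => ?_
        rw [← Finset.sum_filter, Finset.sum_const, nsmul_eq_mul]
      rw [hswap]
      calc ∑ v ∈ univ, ((A'.filter (fun w => v ∈ below par' w)).card : ℝ) * (y v)^2
          ≤ ∑ v ∈ univ, (Q:ℝ) * (y v)^2 := by
            refine Finset.sum_le_sum fun v _ => ?_
            apply mul_le_mul_of_nonneg_right _ (sq_nonneg _)
            exact_mod_cast card_anc_le_of_fiber hvalid hfib v
      _ = (Q:ℝ) * ∑ v ∈ univ, (y v)^2 := by rw [← Finset.mul_sum]
  _ = (Q:ℝ)^2 * ∑ v ∈ univ, (y v)^2 := by ring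

end Analytic

section TreeStruct

variable {V E : Type*} [Fintype V] [Fintype E] [DecidableEq V]

lemma tree_structure (v0 v1 : E → V) (hconn : (supportGraph v0 v1).Connected)
    (hcard : Fintype.card V = Fintype.card E + 1) (hE : Nonempty E) :
    ∃ (par : V → V) (dep : V → ℕ) (ed : V → E),
      FValid par dep ∧
      (∀ v, par v ≠ v →
        (v0 (ed v) = v ∧ v1 (ed v) = par v) ∨ (v0 (ed v) = par v ∧ v1 (ed v) = v)) ∧
      (∀ v w, par v ≠ v → par w ≠ w → ed v = ed w → v = w) ∧
      (∀ e, ∃ v, par v ≠ v ∧ ed v = e) ∧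
      (univ.filter (fun v => par v ≠ v)).card = Fintype.card E ∧
      (∀ v, (children par v).card + (if par v = v then 0 else 1) ≤ maxDeg v0 v1) := by
  classical
  set G := supportGraph v0 v1 with hG
  have hne : Nonempty V := hconn.nonempty
  obtain ⟨r⟩ := hne
  set dep : V → ℕ := fun v => G.dist r v with hdepdef
  have hstep : ∀ v : V, v ≠ r → ∃ (u : V) (e : E),
      dep u + 1 = dep v ∧
      ((v0 e = v ∧ v1 e = u) ∨ (v0 e = u ∧ v1 e = v)) := by
    intro v hvr
    have hreach : G.Reachable v r := hconn.preconnected v r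
    obtain ⟨p, hp⟩ := hreach.exists_walk_length_eq_dist
    cases p with
    | nil => exact absurd rfl hvr
    | @cons _ u _ h q =>
      have hlen : q.length + 1 = G.dist v r := by
        simpa [SimpleGraph.Walk.length_cons] using hp
      have h1 : G.dist r u ≤ q.length := by
        rw [SimpleGraph.dist_comm]; exact SimpleGraph.dist_le q
      have h2 : G.dist r v ≤ G.dist r u + 1 := by
        refine le_trans (hconn.dist_triangle (v := u)) ?_
        have h3 : G.dist u v ≤ 1 := by
          have := SimpleGraph.dist_le (SimpleGraph.Walk.cons h.symm SimpleGraph.Walk.nil)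
          simpa using this
        omega
      have h3 : G.dist r v = G.dist v r := SimpleGraph.dist_comm
      have hdepeq : dep u + 1 = dep v := by
        simp only [hdepdef]
        omega
      obtain ⟨hne', e, he⟩ := h
      exact ⟨u, e, hdepeq, he⟩
  choose pu pe hdep1 hedge using hstep
  set par : V → V := fun v => if h : v = r then v else pu v h with hpardef
  set ed : V → E := fun v => if h : v = r then Classical.arbitrary E else pe v h with heddef
  have hparr : par r = r := by simp [hpardef]
  have hparv : ∀ v (h : v ≠ r), par v = pu v h := by
    intro v h; simp [hpardef, h]
  have hedv : ∀ v (h : v ≠ r), ed v = pe v h := by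
    intro v h; simp [heddef, h]
  have hdeplt : ∀ v, v ≠ r → dep (par v) < dep v := by
    intro v h
    rw [hparv v h]
    have := hdep1 v h
    omega
  have hnr : ∀ v, par v ≠ v ↔ v ≠ r := by
    intro v
    constructor
    · intro h hvr; rw [hvr] at h; exact h hparr
    · intro h heq
      have := hdeplt v h
      rw [heq] at this
      omega
  have hvalid : FValid par dep := by
    intro v
    by_cases h : v = r
    · left; rw [h]; exact hparr
    · right; exact hdeplt v h
  have hedprop : ∀ v, par v ≠ v →
      (v0 (ed v) = v ∧ v1 (ed v) = par v) ∨ (v0 (ed v) = par v ∧ v1 (ed v) = v) := by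
    intro v hv
    have h : v ≠ r := (hnr v).1 hv
    rw [hedv v h, hparv v h]
    exact hedge v h
  have hinj : ∀ v w, par v ≠ v → par w ≠ w → ed v = ed w → v = w := by
    intro v w hv hw hvw
    by_contra hne2
    rcases hedprop v hv with ⟨a1, a2⟩ | ⟨a1, a2⟩ <;>
      rcases hedprop w hw with ⟨b1, b2⟩ | ⟨b1, b2⟩ <;>
      rw [hvw] at a1 a2
    · exact hne2 (a1.symm.trans b1)
    · have e1 : v = par w := a1.symm.trans b1
      have e2 : par v = w := a2.symm.trans b2
      have d1 := hdeplt v ((hnr v).1 hv)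
      have d2 := hdeplt w ((hnr w).1 hw)
      rw [← e1] at d2; rw [e2] at d1
      omega
    · have e1 : par v = w := a1.symm.trans b1
      have e2 : v = par w := a2.symm.trans b2
      have d1 := hdeplt v ((hnr v).1 hv)
      have d2 := hdeplt w ((hnr w).1 hw)
      rw [← e2] at d2; rw [e1] at d1
      omega
    · exact hne2 (a2.symm.trans b2)
  have hfiltercard : (univ.filter (fun v => par v ≠ v)).card = Fintype.card E := by
    have hset : univ.filter (fun v => par v ≠ v) = univ.erase r := by
      ext v
      simp only [Finset.mem_filter, Finset.mem_univ, true_and, Finset.mem_erase, and_true,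
        hnr v]
    rw [hset, Finset.card_erase_of_mem (Finset.mem_univ r), Finset.card_univ]
    omega
  have hsurj : ∀ e, ∃ v, par v ≠ v ∧ ed v = e := by
    have hinj' : Set.InjOn ed (univ.filter (fun v => par v ≠ v)) := by
      intro a ha b hb hab
      simp only [Finset.coe_filter, Set.mem_setOf_eq] at ha hb
      exact hinj a b ha.2 hb.2 hab
    have himg : (univ.filter (fun v => par v ≠ v)).image ed = univ := by
      apply Finset.eq_univ_of_card
      rw [Finset.card_image_of_injOn hinj', hfiltercard]
    intro e
    have he : e ∈ (univ.filter (fun v => par v ≠ v)).image ed := by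
      rw [himg]; exact Finset.mem_univ e
    obtain ⟨v, hv, hve⟩ := Finset.mem_image.1 he
    simp only [Finset.mem_filter] at hv
    exact ⟨v, hv.2, hve⟩
  have hdegbound : ∀ v, (children par v).card + (if par v = v then 0 else 1)
      ≤ maxDeg v0 v1 := by
    intro v
    set S : Finset V := if par v = v then children par v else insert v (children par v)
      with hSdef
    have hvnotch : v ∉ children par v := by simp [children]
    have hcardS : S.card = (children par v).card + (if par v = v then 0 else 1) := by
      by_cases h : par v = v
      · simp [hSdef, h]
      · simp [hSdef, h, Finset.card_insert_of_notMem hvnotch]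
    have hSnr : ∀ w ∈ S, par w ≠ w := by
      intro w hw
      by_cases h : par v = v
      · rw [hSdef, if_pos h] at hw
        simp only [children, Finset.mem_filter] at hw
        rw [hw.2.1]; exact fun hh => hw.2.2 hh.symm
      · rw [hSdef, if_neg h] at hw
        rcases Finset.mem_insert.1 hw with h1 | h1
        · rw [h1]; exact h
        · simp only [children, Finset.mem_filter] at h1
          rw [h1.2.1]; exact fun hh => h1.2.2 hh.symm
    have himg2 : S.image ed
        ⊆ (univ.filter (fun e => v0 e = v)) ∪ (univ.filter (fun e => v1 e = v)) := by
      intro e he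
      obtain ⟨w, hw, hwe⟩ := Finset.mem_image.1 he
      have hwnr := hSnr w hw
      have hch : w ∈ children par v ∨ w = v := by
        by_cases h : par v = v
        · left; rw [hSdef, if_pos h] at hw; exact hw
        · rw [hSdef, if_neg h] at hw
          rcases Finset.mem_insert.1 hw with h1 | h1
          · right; exact h1
          · left; exact h1
      rcases hch with hch | hch
      · simp only [children, Finset.mem_filter] at hch
        rcases hedprop w hwnr with ⟨a1, a2⟩ | ⟨a1, a2⟩
        · refine Finset.mem_union_right _ ?_
          simp only [Finset.mem_filter, Finset.mem_univ, true_and, ← hwe]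
          rw [a2, hch.2.1]
        · refine Finset.mem_union_left _ ?_
          simp only [Finset.mem_filter, Finset.mem_univ, true_and, ← hwe]
          rw [a1, hch.2.1]
      · subst hch
        rcases hedprop w hwnr with ⟨a1, a2⟩ | ⟨a1, a2⟩
        · refine Finset.mem_union_left _ ?_
          simp only [Finset.mem_filter, Finset.mem_univ, true_and, ← hwe]
          exact a1
        · refine Finset.mem_union_right _ ?_
          simp only [Finset.mem_filter, Finset.mem_univ, true_and, ← hwe]
          exact a2
    have hinjS : Set.InjOn ed S := by
      intro a ha b hb hab
      exact hinj a b (hSnr a (Finset.mem_coe.1 ha)) (hSnr b (Finset.mem_coe.1 hb)) hab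
    calc (children par v).card + (if par v = v then 0 else 1) = S.card := hcardS.symm
    _ = (S.image ed).card := (Finset.card_image_of_injOn hinjS).symm
    _ ≤ ((univ.filter (fun e => v0 e = v)) ∪ (univ.filter (fun e => v1 e = v))).card :=
        Finset.card_le_card himg2
    _ ≤ (univ.filter (fun e => v0 e = v)).card + (univ.filter (fun e => v1 e = v)).card :=
        Finset.card_union_le _ _
    _ = vdeg v0 v1 v := rfl
    _ ≤ maxDeg v0 v1 := Finset.le_sup (Finset.mem_univ v)
  exact ⟨par, dep, ed, hvalid, hedprop, hinj, hsurj, hfiltercard, hdegbound⟩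

end TreeStruct

section Final

variable {V E : Type*} [Fintype V] [Fintype E] [DecidableEq V]

lemma norm_sq_eucl {ι : Type*} [Fintype ι] (x : EuclideanSpace ℝ ι) :
    ‖x‖^2 = ∑ i ∈ univ, (x i)^2 := by
  rw [EuclideanSpace.norm_eq, Real.sq_sqrt (by positivity)]
  exact Finset.sum_congr rfl fun i _ => by rw [Real.norm_eq_abs, sq_abs]

lemma exists_vanishing (U : Submodule ℝ (EuclideanSpace ℝ E))
    (F : Finset E) (h : F.card < Module.finrank ℝ U) :
    ∃ x ∈ U, x ≠ 0 ∧ ∀ e ∈ F, x e = 0 := by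
  classical
  let φ : U →ₗ[ℝ] ({e // e ∈ F} → ℝ) :=
    { toFun := fun u => fun f => (u : EuclideanSpace ℝ E) f.1
      map_add' := by intro a b; funext f; rfl
      map_smul' := by intro c a; funext f; rfl }
  have hker : LinearMap.ker φ ≠ ⊥ := by
    intro hbot
    have h1 := LinearMap.finrank_range_add_finrank_ker φ
    rw [hbot, finrank_bot, add_zero] at h1
    have h2 : Module.finrank ℝ (LinearMap.range φ) ≤ Module.finrank ℝ ({e // e ∈ F} → ℝ) :=
      Submodule.finrank_le _
    have h3 : Module.finrank ℝ ({e // e ∈ F} → ℝ) = F.card := by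
      rw [Module.finrank_fintype_fun_eq_card, Fintype.card_coe]
    omega
  obtain ⟨z, hzker, hz0⟩ := (Submodule.ne_bot_iff _).1 hker
  refine ⟨(z : EuclideanSpace ℝ E), z.2, ?_, ?_⟩
  · intro hz
    exact hz0 (by exact_mod_cast Subtype.ext hz)
  · intro e he
    have := LinearMap.mem_ker.1 hzker
    exact congrFun this ⟨e, he⟩

lemma two_le_cardE (v0 v1 : E → V) (hconn : (supportGraph v0 v1).Connected)
    (hcard : Fintype.card V = Fintype.card E + 1)
    (hdeg : 2 ≤ maxDeg v0 v1) : 2 ≤ Fintype.card E := by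
  classical
  have hv : ∃ v, 2 ≤ vdeg v0 v1 v := by
    by_contra h
    push_neg at h
    have : maxDeg v0 v1 ≤ 1 := Finset.sup_le fun v _ => by have := h v; omega
    omega
  obtain ⟨v, hv⟩ := hv
  by_contra hlt
  push_neg at hlt
  have hE1 : Fintype.card E = 1 := by
    have hcases : Fintype.card E = 0 ∨ Fintype.card E = 1 := by omega
    rcases hcases with h | h
    · exfalso
      have h1 : (univ.filter (fun e => v0 e = v)).card ≤ Fintype.card E := by
        rw [← Finset.card_univ]; exact Finset.card_le_card (Finset.filter_subset _ _)
      have h2 : (univ.filter (fun e => v1 e = v)).card ≤ Fintype.card E := by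
        rw [← Finset.card_univ]; exact Finset.card_le_card (Finset.filter_subset _ _)
      unfold vdeg at hv
      omega
    · exact h
  obtain ⟨e₀, he₀⟩ := Fintype.card_eq_one_iff.1 hE1
  -- both endpoints of e₀ equal v
  have hloop : v0 e₀ = v ∧ v1 e₀ = v := by
    have h1 : (univ.filter (fun e => v0 e = v)).card ≤ 1 := by
      rw [← hE1, ← Finset.card_univ]
      exact Finset.card_le_card (Finset.filter_subset _ _)
    have h2 : (univ.filter (fun e => v1 e = v)).card ≤ 1 := by
      rw [← hE1, ← Finset.card_univ]
      exact Finset.card_le_card (Finset.filter_subset _ _)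
    unfold vdeg at hv
    have h1' : (univ.filter (fun e => v0 e = v)).card = 1 := by omega
    have h2' : (univ.filter (fun e => v1 e = v)).card = 1 := by omega
    obtain ⟨a, ha⟩ := Finset.card_eq_one.1 h1'
    obtain ⟨b, hb⟩ := Finset.card_eq_one.1 h2'
    have haa : a ∈ univ.filter (fun e => v0 e = v) := by rw [ha]; exact Finset.mem_singleton_self a
    have hbb : b ∈ univ.filter (fun e => v1 e = v) := by rw [hb]; exact Finset.mem_singleton_self b
    simp only [Finset.mem_filter] at haa hbb
    rw [he₀ a] at haa; rw [he₀ b] at hbb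
    exact ⟨haa.2, hbb.2⟩
  -- two distinct vertices exist
  have hV2 : 1 < Fintype.card V := by omega
  obtain ⟨a, b, hab⟩ := Fintype.exists_pair_of_one_lt_card hV2
  obtain ⟨p⟩ := hconn.preconnected a b
  cases p with
  | nil => exact hab rfl
  | cons h q =>
    obtain ⟨hne, e, he⟩ := h
    rw [he₀ e] at he
    rcases he with ⟨h1, h2⟩ | ⟨h1, h2⟩
    · rw [hloop.1] at h1
      rw [hloop.2] at h2
      exact hne (h1.symm.trans h2)
    · rw [hloop.1] at h1
      rw [hloop.2] at h2
      exact hne (h2.symm.trans h1)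

lemma subspace_bound (v0 v1 : E → V) (hconn : (supportGraph v0 v1).Connected)
    (hcard : Fintype.card V = Fintype.card E + 1)
    (hm2 : 2 ≤ Fintype.card E)
    (lam : ℝ) (hlam0 : 0 ≤ lam)
    (U : Submodule ℝ (EuclideanSpace ℝ E)) (hU : ∀ x ∈ U, ‖c1 v0 v1 x‖ ≤ lam * ‖x‖)
    (hn2 : 2 ≤ Module.finrank ℝ U) :
    (Module.finrank ℝ U : ℝ)
      ≤ 2 * (Fintype.card E : ℝ) * (maxDeg v0 v1 : ℝ) * lam := by
  classical
  set m := Fintype.card E with hm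
  set d := maxDeg v0 v1 with hd
  set n := Module.finrank ℝ U with hn
  have hnm : n ≤ m := by
    rw [hn, hm]
    calc Module.finrank ℝ U ≤ Module.finrank ℝ (EuclideanSpace ℝ E) := Submodule.finrank_le U
    _ = Fintype.card E := finrank_euclideanSpace
  set k := n - 1 with hk
  have hk1 : 1 ≤ k := by omega
  have hkm : k ≤ m - 1 := by omega
  set s := (m-1)/k + 1 with hs
  have hs2 : 2 ≤ s := by
    have h1 : 1 ≤ (m-1)/k := Nat.one_le_div_iff (by omega) |>.2 (by omega)
    rw [hs]
    exact Nat.succ_le_succ h1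
  have hE : Nonempty E := Fintype.card_pos_iff.1 (by omega)
  obtain ⟨par, dep, ed, hvalid, hedprop, hinj, hsurj, hfc, hdegb⟩ :=
    tree_structure v0 v1 hconn hcard hE
  obtain ⟨K, hKnr, hKs, hfib⟩ :=
    greedy dep d s (by omega) m par hvalid (le_of_eq hfc) hdegb
  have hKcard : K.card ≤ k := by
    have h1 := greedy_card hvalid K hKnr hKs
    rw [hfc] at h1
    have h2 : m ≤ k * s := by
      have hdm := Nat.div_add_mod (m-1) k
      have hmod : (m-1) % k < k := Nat.mod_lt _ (by omega)
      have hexp : k * s = k * ((m-1)/k) + k := by rw [hs]; ring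
      set t := k * ((m-1)/k) with ht
      set u := k * s with hu
      set r := (m-1) % k with hr
      omega
    have := le_trans h1 h2
    exact Nat.le_of_mul_le_mul_right this (by omega)
  set F := K.image ed with hF
  have hFcard : F.card < n := by
    have himg : F.card ≤ K.card := by rw [hF]; exact Finset.card_image_le
    omega
  obtain ⟨x, hxU, hx0, hxF⟩ := exists_vanishing U F (by rw [← hn]; exact hFcard)
  have hxK : ∀ u ∈ K, x (ed u) = 0 := fun u hu => hxF _ (Finset.mem_image_of_mem ed hu)
  set Q := d * (s-1) with hQ
  have hfib' : ∀ ρ, (fiber (cutF K par) dep ρ).card ≤ Q + 1 := fun ρ => by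
    have := hfib ρ; omega
  have hen := energy_bound hvalid v0 v1 ed hedprop hinj hsurj K hKnr Q hfib' x hxK
  have hx2 : ‖x‖^2 ≤ (Q:ℝ)^2 * ‖c1 v0 v1 x‖^2 := by
    rw [norm_sq_eucl, norm_sq_eucl]; exact hen
  have hy : ‖c1 v0 v1 x‖ ≤ lam * ‖x‖ := hU x hxU
  have hxpos : (0:ℝ) < ‖x‖ := norm_pos_iff.2 hx0
  have hQ0 : (0:ℝ) ≤ (Q:ℝ) := Nat.cast_nonneg _
  have h1 : 1 ≤ (Q:ℝ) * lam := by
    have h2 : ‖c1 v0 v1 x‖^2 ≤ (lam * ‖x‖)^2 := by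
      apply pow_le_pow_left₀ (norm_nonneg _) hy
    have h2' : (Q:ℝ)^2 * ‖c1 v0 v1 x‖^2 ≤ (Q:ℝ)^2 * (lam * ‖x‖)^2 :=
      mul_le_mul_of_nonneg_left h2 (sq_nonneg _)
    have h3 : ‖x‖^2 ≤ ((Q:ℝ) * lam)^2 * ‖x‖^2 := by
      calc ‖x‖^2 ≤ (Q:ℝ)^2 * (lam * ‖x‖)^2 := le_trans hx2 h2'
      _ = ((Q:ℝ)*lam)^2 * ‖x‖^2 := by ring
    have h4 : 1 ≤ ((Q:ℝ) * lam)^2 := by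
      by_contra hcon
      push_neg at hcon
      have hxx : (0:ℝ) < ‖x‖^2 := by positivity
      nlinarith
    have ht0 : (0:ℝ) ≤ (Q:ℝ) * lam := mul_nonneg hQ0 hlam0
    nlinarith
  have hnQ : (n:ℝ) * (Q:ℝ) ≤ 2 * (m:ℝ) * (d:ℝ) := by
    have hnat : n * Q ≤ 2 * m * d := by
      have hq : k * ((m-1)/k) ≤ m - 1 := by
        rw [mul_comm]; exact Nat.div_mul_le_self _ _
      have hq2 : (m-1)/k ≤ m - 1 := Nat.div_le_self _ _
      have hns : n * (s-1) ≤ 2 * m := by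
        have hsk : s - 1 = (m-1)/k := by rw [hs]; exact Nat.add_sub_cancel _ _
        have hnk : n = k + 1 := by omega
        rw [hsk, hnk, add_mul, one_mul]
        refine le_trans (Nat.add_le_add hq hq2) (by omega)
      calc n * Q = n * (d * (s-1)) := by rw [hQ]
      _ = d * (n * (s-1)) := by ring
      _ ≤ d * (2 * m) := Nat.mul_le_mul_left d hns
      _ = 2 * m * d := by ring
    exact_mod_cast hnat
  calc (n:ℝ) = (n:ℝ) * 1 := by ring
  _ ≤ (n:ℝ) * ((Q:ℝ) * lam) := by
      apply mul_le_mul_of_nonneg_left h1 (Nat.cast_nonneg _)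
  _ = ((n:ℝ) * (Q:ℝ)) * lam := by ring
  _ ≤ (2 * (m:ℝ) * (d:ℝ)) * lam := mul_le_mul_of_nonneg_right hnQ hlam0
  _ = 2 * (m:ℝ) * (d:ℝ) * lam := by ring

end Final

/-- For a finite tree T with deg(T) ≥ 2 and 1/(2·(|E(T)|−1)·deg(T)) ≤ λ < 1,
we have F₁(T)(λ) − F₁(T)(0) ≤ 2·|E(T)|·deg(T)·λ. -/
theorem tree_sdf_estimate {V E : Type*} [Fintype V] [Fintype E] [DecidableEq V]
    (v0 v1 : E → V) (hconn : (supportGraph v0 v1).Connected)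
    (hcard : Fintype.card V = Fintype.card E + 1)
    (hdeg : 2 ≤ maxDeg v0 v1) (lam : ℝ)
    (h0 : 1 / (2 * ((Fintype.card E : ℝ) - 1) * (maxDeg v0 v1 : ℝ)) ≤ lam)
    (h1 : lam < 1) :
    (sdf (c1 v0 v1) lam : ℝ) - (sdf (c1 v0 v1) 0 : ℝ) ≤
      2 * (Fintype.card E : ℝ) * (maxDeg v0 v1 : ℝ) * lam := by
    classical
  have hm2 : 2 ≤ Fintype.card E := two_le_cardE v0 v1 hconn hcard hdeg
  have hd2 : (2:ℝ) ≤ (maxDeg v0 v1 : ℝ) := by exact_mod_cast hdeg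
  have hm2R : (2:ℝ) ≤ (Fintype.card E : ℝ) := by exact_mod_cast hm2
  have hdenpos : (0:ℝ) < 2 * ((Fintype.card E : ℝ) - 1) * (maxDeg v0 v1 : ℝ) := by nlinarith
  have hlampos : 0 < lam := lt_of_lt_of_le (by positivity) h0
  have hRHS1 : (1:ℝ) ≤ 2 * (Fintype.card E : ℝ) * (maxDeg v0 v1 : ℝ) * lam := by
    rw [div_le_iff₀ hdenpos] at h0
    nlinarith [hlampos.le, hd2, hm2R]
  have hS0 : (0:ℕ) ∈ {n : ℕ | ∃ U : Submodule ℝ (EuclideanSpace ℝ E),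
      Module.finrank ℝ U = n ∧ ∀ v ∈ U, ‖c1 v0 v1 v‖ ≤ lam * ‖v‖} := by
    refine ⟨⊥, finrank_bot ℝ _, ?_⟩
    intro v hv
    rw [Submodule.mem_bot] at hv
    simp [hv]
  have hSbdd : BddAbove {n : ℕ | ∃ U : Submodule ℝ (EuclideanSpace ℝ E),
      Module.finrank ℝ U = n ∧ ∀ v ∈ U, ‖c1 v0 v1 v‖ ≤ lam * ‖v‖} := by
    refine ⟨Fintype.card E, ?_⟩
    rintro nn ⟨U, hUr, -⟩
    rw [← hUr]
    calc Module.finrank ℝ U ≤ Module.finrank ℝ (EuclideanSpace ℝ E) := Submodule.finrank_le U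
    _ = Fintype.card E := finrank_euclideanSpace
  have hmem : sdf (c1 v0 v1) lam ∈ {n : ℕ | ∃ U : Submodule ℝ (EuclideanSpace ℝ E),
      Module.finrank ℝ U = n ∧ ∀ v ∈ U, ‖c1 v0 v1 v‖ ≤ lam * ‖v‖} := by
    unfold sdf
    exact Nat.sSup_mem ⟨0, hS0⟩ hSbdd
  obtain ⟨U, hUrank, hUprop⟩ := hmem
  have hbound : (sdf (c1 v0 v1) lam : ℝ)
      ≤ 2 * (Fintype.card E : ℝ) * (maxDeg v0 v1 : ℝ) * lam := by
    by_cases hn2 : 2 ≤ sdf (c1 v0 v1) lam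
    · rw [← hUrank] at hn2 ⊢
      exact subspace_bound v0 v1 hconn hcard hm2 lam hlampos.le U hUprop hn2
    · push_neg at hn2
      have hle1 : (sdf (c1 v0 v1) lam : ℝ) ≤ 1 := by
        have := Nat.lt_succ_iff.1 hn2
        exact_mod_cast this
      linarith [hRHS1]
  have h0le : (0:ℝ) ≤ (sdf (c1 v0 v1) 0 : ℝ) := Nat.cast_nonneg _
  linarith [hbound, h0le]
end
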